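/- Let Λ be a supersingular K3 lattice and Λ̃ = Λ ⊕ U2(p), with e, f the standard basis of the U2(p) summand (so ⟨e,e⟩ = ⟨f,f⟩ = 0, ⟨e,f⟩ = −p, and e ∈ pΛ̃*). Let v ∈ Λ̃0 = pΛ̃*/pΛ̃ be an isotropic vector such that the pairing of v with the class of e in Λ̃0 is nonzero. Then there exist l ∈ Λ and s ∈ ℤ such that x = f + l + s·e is a primitive isotropic vector of Λ̃ (necessarily ⟨l,l⟩ = 2ps) lying in pΛ̃*, and the image of x in Λ̃0 is a nonzero F_p-scalar multiple of v. -/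

import Mathlib

section Lattices

variable (Q : Type*) [AddCommGroup Q] [Module ℚ Q]

/-- The dual lattice `L* = {x ∈ Q : ⟨x, y⟩ ∈ ℤ for all y ∈ L}` of a lattice `L` inside the
rational quadratic space `Q` (thought of as `L ⊗ ℚ`). -/
noncomputable def dualL (bQ : LinearMap.BilinForm ℚ Q) (L : Submodule ℤ Q) :
    Submodule ℤ Q :=
  ⨅ (y : Q) (_ : y ∈ L),
    Submodule.comap (LinearMap.restrictScalars ℤ (bQ.flip y))
      (LinearMap.range (Algebra.linearMap ℤ ℚ))

/-- Scaling a lattice by a natural number `p` (inside the ambient rational vector space). -/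
noncomputable def psmul (p : ℕ) (L : Submodule ℤ Q) : Submodule ℤ Q :=
  L.map (LinearMap.restrictScalars ℤ ((p : ℚ) • (LinearMap.id : Q →ₗ[ℚ] Q)))

/-- The quotient `B/A` of two lattices (`A` is intended to be contained in `B`). -/
noncomputable abbrev quotMod (A B : Submodule ℤ Q) := (↥B) ⧸ (A.comap B.subtype)

/-- A common generalization of (extended) supersingular K3 lattices: a full lattice
`L` of rank `r` in the rational quadratic space `(Q, bQ)` which is integral, even,
non-degenerate, whose Gram determinant is `dsign` times a nonzero rational square, which has
an orthogonal rational basis with `spos` positive squares and `sneg` negative squares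
(signature `(spos, sneg)`), and whose discriminant group `L*/L` is killed by `p`. -/
def IsK3Type (p : ℕ) (r : ℕ) (dsign : ℤ) (spos sneg : ℕ)
    (bQ : LinearMap.BilinForm ℚ Q) (L : Submodule ℤ Q) : Prop :=
  Submodule.span ℚ (L : Set Q) = ⊤ ∧
  (∀ x ∈ L, ∀ y ∈ L, ∃ n : ℤ, bQ x y = (n : ℚ)) ∧
  (∀ x ∈ L, ∃ n : ℤ, bQ x x = 2 * (n : ℚ)) ∧
  (∀ x : Q, (∀ y : Q, bQ x y = 0) → x = 0) ∧
  (∃ v : Module.Basis (Fin r) ℤ ↥L, ∃ q : ℚ, q ≠ 0 ∧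
    Matrix.det (Matrix.of fun i j : Fin r => bQ ((v i : Q)) ((v j : Q))) =
      (dsign : ℚ) * q ^ 2) ∧
  (∃ w : Module.Basis (Fin r) ℚ Q,
    (∀ i j, i ≠ j → bQ (w i) (w j) = 0) ∧
    (Finset.univ.filter fun i => 0 < bQ (w i) (w i)).card = spos ∧
    (Finset.univ.filter fun i => bQ (w i) (w i) < 0).card = sneg) ∧
  (∀ x ∈ dualL Q bQ L, (p : ℤ) • x ∈ L)

/-- A supersingular K3 lattice: even, non-degenerate, of rank 22, Gram determinant `-1`
times a square, signature `(1, 21)`, with `p`-torsion discriminant group. -/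
def IsSSK3 (p : ℕ) (bQ : LinearMap.BilinForm ℚ Q) (L : Submodule ℤ Q) : Prop :=
  IsK3Type Q p 22 (-1) 1 21 bQ L

/-- An extended supersingular K3 lattice: even, non-degenerate, of rank 24, Gram determinant
a square, signature `(2, 22)`, with `p`-torsion discriminant group. -/
def IsExtSSK3 (p : ℕ) (bQ : LinearMap.BilinForm ℚ Q) (L : Submodule ℤ Q) : Prop :=
  IsK3Type Q p 24 1 2 22 bQ L

/-- The standard integral lattice `ℤ² ⊆ ℚ²` (underlying `U₂` and `U₂(p)`). -/
noncomputable def intLat : Submodule ℤ (ℚ × ℚ) :=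
  Submodule.span ℤ {((1 : ℚ), (0 : ℚ)), ((0 : ℚ), (1 : ℚ))}

/-- The orthogonal sum of the form `bQ` on `Q` with the hyperbolic plane scaled by `c`:
on `Q × ℚ²`, `⟨(x,a,b), (x',a',b')⟩ = bQ x x' - c(ab' + a'b)`.  For `c = 1` this is
`⟨,⟩ ⊕ U₂`, for `c = p` it is `⟨,⟩ ⊕ U₂(p)`. -/
noncomputable def sumForm (c : ℚ) (bQ : LinearMap.BilinForm ℚ Q) :
    LinearMap.BilinForm ℚ (Q × ℚ × ℚ) :=
  LinearMap.mk₂ ℚ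
    (fun x y => bQ x.1 y.1 - c * (x.2.1 * y.2.2) - c * (x.2.2 * y.2.1))
    (fun m n o => by
      simp only [Prod.fst_add, Prod.snd_add, map_add, LinearMap.add_apply]
      ring)
    (fun a m n => by
      simp only [Prod.smul_fst, Prod.smul_snd, map_smul, LinearMap.smul_apply,
        smul_eq_mul]
      ring)
    (fun m n o => by
      simp only [Prod.fst_add, Prod.snd_add, map_add, LinearMap.add_apply]
      ring)
    (fun a m n => by
      simp only [Prod.smul_fst, Prod.smul_snd, map_smul, LinearMap.smul_apply,
        smul_eq_mul]
      ring)

end Lattices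


section Helpers

variable (Q : Type*) [AddCommGroup Q] [Module ℚ Q]

lemma sumForm_apply' (c : ℚ) (bQ : LinearMap.BilinForm ℚ Q) (x y : Q × ℚ × ℚ) :
    sumForm Q c bQ x y = bQ x.1 y.1 - c * (x.2.1 * y.2.2) - c * (x.2.2 * y.2.1) := rfl

lemma mem_dualL_iff (bQ : LinearMap.BilinForm ℚ Q) (L : Submodule ℤ Q) (x : Q) :
    x ∈ dualL Q bQ L ↔ ∀ y ∈ L, ∃ n : ℤ, bQ x y = (n : ℚ) := by
  simp only [dualL, Submodule.mem_iInf, Submodule.mem_comap, LinearMap.mem_range,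
    LinearMap.restrictScalars_apply, LinearMap.flip_apply, Algebra.linearMap_apply,
    algebraMap_int_eq, eq_comm, Int.coe_castRingHom]
  exact Iff.rfl

lemma mem_psmul_iff (p : ℕ) (L : Submodule ℤ Q) (x : Q) :
    x ∈ psmul Q p L ↔ ∃ y ∈ L, (p : ℚ) • y = x := by
  simp only [psmul, Submodule.mem_map, LinearMap.restrictScalars_apply,
    LinearMap.smul_apply, LinearMap.id_apply]

lemma mem_intLat_iff (x : ℚ × ℚ) :
    x ∈ intLat ↔ ∃ m n : ℤ, x = ((m : ℚ), (n : ℚ)) := by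
  constructor
  · intro hx
    refine Submodule.span_induction ?_ ?_ ?_ ?_ hx
    · rintro y (rfl | rfl)
      · exact ⟨1, 0, by norm_num⟩
      · exact ⟨0, 1, by norm_num⟩
    · exact ⟨0, 0, by norm_num; rfl⟩
    · rintro y z - - ⟨m, n, rfl⟩ ⟨m', n', rfl⟩
      exact ⟨m + m', n + n', by push_cast; rfl⟩
    · rintro c y - ⟨m, n, rfl⟩
      exact ⟨c * m, c * n, by push_cast [Prod.smul_def]; simp [zsmul_eq_mul]⟩
  · rintro ⟨m, n, rfl⟩
    have h : ((m : ℚ), (n : ℚ)) = m • ((1:ℚ), (0:ℚ)) + n • ((0:ℚ), (1:ℚ)) := by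
      simp [Prod.smul_def, zsmul_eq_mul]
    rw [h]
    exact add_mem (Submodule.smul_mem _ _ (Submodule.subset_span (by simp)))
      (Submodule.smul_mem _ _ (Submodule.subset_span (by simp)))

end Helpers

theorem stmt17 (p : ℕ) [Fact p.Prime] (hp : p ≠ 2)
    (Q : Type*) [AddCommGroup Q] [Module ℚ Q]
    (bQ : LinearMap.BilinForm ℚ Q) (hsymm : ∀ x y, bQ x y = bQ y x)
    (Λ : Submodule ℤ Q) (hΛ : IsSSK3 Q p bQ Λ)
    (z : Q × ℚ × ℚ)
    (hz : z ∈ psmul (Q × ℚ × ℚ) p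
      (dualL (Q × ℚ × ℚ) (sumForm Q (p : ℚ) bQ) (Λ.prod intLat)))
    (hz0 : z ∉ psmul (Q × ℚ × ℚ) p (Λ.prod intLat))
    (hziso : ∃ m : ℤ, sumForm Q (p : ℚ) bQ z z = (p : ℚ) ^ 2 * (m : ℚ))
    (hze : ¬ ∃ m : ℤ,
      sumForm Q (p : ℚ) bQ z ((0 : Q), (1 : ℚ), (0 : ℚ)) = (p : ℚ) ^ 2 * (m : ℚ)) :
    ∃ (l : Q) (s : ℤ), l ∈ Λ ∧
      ((l, (s : ℚ), (1 : ℚ)) : Q × ℚ × ℚ) ∈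
        psmul (Q × ℚ × ℚ) p
          (dualL (Q × ℚ × ℚ) (sumForm Q (p : ℚ) bQ) (Λ.prod intLat)) ∧
      (¬ ∃ m : ℤ, 1 < m ∧ ∃ y ∈ Λ.prod intLat,
        ((l, (s : ℚ), (1 : ℚ)) : Q × ℚ × ℚ) = m • y) ∧
      sumForm Q (p : ℚ) bQ (l, (s : ℚ), (1 : ℚ)) (l, (s : ℚ), (1 : ℚ)) = 0 ∧
      bQ l l = 2 * (p : ℚ) * (s : ℚ) ∧
      ∃ c : ℤ, ¬ ((p : ℤ) ∣ c) ∧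
        ((l, (s : ℚ), (1 : ℚ)) : Q × ℚ × ℚ) - c • z ∈
          psmul (Q × ℚ × ℚ) p (Λ.prod intLat) := by
  classical
  haveI : NeZero p := ⟨(Fact.out : p.Prime).ne_zero⟩
  have hp0 : (p : ℚ) ≠ 0 := Nat.cast_ne_zero.mpr (Fact.out : p.Prime).ne_zero
  obtain ⟨w, hw, hwz⟩ := (mem_psmul_iff _ _ _ _).mp hz
  rw [mem_dualL_iff] at hw
  -- pairings of z with the lattice are divisible by p
  have hzpair : ∀ y ∈ Λ.prod intLat, ∃ n : ℤ, sumForm Q (p:ℚ) bQ z y = (p:ℚ) * n := by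
    intro y hy
    obtain ⟨n, hn⟩ := hw y hy
    refine ⟨n, ?_⟩
    rw [← hwz]
    simp only [map_smul, LinearMap.smul_apply, smul_eq_mul, hn]
  -- the first component of z lies in Λ
  have hw1 : w.1 ∈ dualL Q bQ Λ := by
    rw [mem_dualL_iff]
    intro μ hμ
    obtain ⟨n, hn⟩ := hw (μ, 0, 0) (Submodule.mem_prod.mpr ⟨hμ, zero_mem _⟩)
    refine ⟨n, ?_⟩
    rw [sumForm_apply'] at hn
    simpa using hn
  have hz1Λ : z.1 ∈ Λ := by
    have h1 : (p:ℤ) • w.1 ∈ Λ := hΛ.2.2.2.2.2.2 w.1 hw1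
    have h2 : z.1 = (p:ℚ) • w.1 := by rw [← hwz]; rfl
    rw [h2, show ((p:ℚ)) = (((p:ℤ):ℚ)) by push_cast; ring, Int.cast_smul_eq_zsmul]
    exact h1
  -- z.2.1 and z.2.2 are integers
  have hfmem : ((0:Q), (0:ℚ), (1:ℚ)) ∈ Λ.prod intLat :=
    Submodule.mem_prod.mpr ⟨zero_mem _, (mem_intLat_iff _).mpr ⟨0, 1, by norm_num⟩⟩
  have hemem : ((0:Q), (1:ℚ), (0:ℚ)) ∈ Λ.prod intLat :=
    Submodule.mem_prod.mpr ⟨zero_mem _, (mem_intLat_iff _).mpr ⟨1, 0, by norm_num⟩⟩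
  obtain ⟨a, ha⟩ : ∃ a : ℤ, z.2.1 = (a:ℚ) := by
    obtain ⟨n, hn⟩ := hzpair _ hfmem
    rw [sumForm_apply'] at hn
    simp only [map_zero, LinearMap.zero_apply, mul_one, mul_zero, sub_zero, zero_sub] at hn
    refine ⟨-n, ?_⟩
    have h : (p:ℚ) * z.2.1 = (p:ℚ) * ((-n : ℤ) : ℚ) := by push_cast; linarith
    exact mul_left_cancel₀ hp0 h
  obtain ⟨b, hb⟩ : ∃ b : ℤ, z.2.2 = (b:ℚ) := by
    obtain ⟨n, hn⟩ := hzpair _ hemem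
    rw [sumForm_apply'] at hn
    simp only [map_zero, LinearMap.zero_apply, mul_one, mul_zero, sub_zero, zero_sub] at hn
    refine ⟨-n, ?_⟩
    have h : (p:ℚ) * z.2.2 = (p:ℚ) * ((-n : ℤ) : ℚ) := by push_cast; linarith
    exact mul_left_cancel₀ hp0 h
  -- p does not divide b
  have hpb : ¬ (p:ℤ) ∣ b := by
    rintro ⟨k, hk⟩
    refine hze ⟨-k, ?_⟩
    rw [sumForm_apply']
    simp only [map_zero, LinearMap.zero_apply, mul_one, mul_zero, sub_zero, zero_sub]
    rw [hb, hk]; push_cast; ring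
  -- evenness and the isotropy hypothesis
  obtain ⟨n, hn⟩ := hΛ.2.2.1 z.1 hz1Λ
  obtain ⟨m, hm⟩ := hziso
  rw [sumForm_apply', hn, ha, hb] at hm
  have hmint : 2 * n - 2 * (p:ℤ) * a * b = (p:ℤ)^2 * m := by
    have hq : ((2 * n - 2 * (p:ℤ) * a * b : ℤ) : ℚ) = (((p:ℤ)^2 * m : ℤ) : ℚ) := by
      push_cast
      linear_combination hm
    exact_mod_cast hq
  -- m is even
  have hodd : ¬ (2 ∣ p) :=
    fun h => hp ((Nat.prime_dvd_prime_iff_eq Nat.prime_two Fact.out).mp h).symm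
  obtain ⟨m', hm'⟩ : ∃ m' : ℤ, m = 2 * m' := by
    have h2 : (2:ℤ) ∣ (p:ℤ)^2 * m := ⟨n - (p:ℤ) * a * b, by linarith⟩
    rcases (Int.prime_two.dvd_mul.mp h2) with h | h
    · exact absurd (show (2:ℕ) ∣ p by exact_mod_cast Int.prime_two.dvd_of_dvd_pow h) hodd
    · exact h
  have hkey : n = (p:ℤ)^2 * m' + (p:ℤ) * a * b := by
    have := hmint
    rw [hm'] at this
    linarith
  -- choose c inverting b mod p
  set c : ℤ := (((b : ZMod p)⁻¹).val : ℤ) with hc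
  have hbz : (b : ZMod p) ≠ 0 := by
    rw [Ne, ZMod.intCast_zmod_eq_zero_iff_dvd]; exact hpb
  have hcb1 : ((c * b - 1 : ℤ) : ZMod p) = 0 := by
    push_cast [hc]
    rw [ZMod.natCast_val, ZMod.cast_id, inv_mul_cancel₀ hbz, sub_self]
  obtain ⟨t, ht⟩ : ∃ t : ℤ, c * b = 1 + (p:ℤ) * t := by
    obtain ⟨t, ht⟩ := (ZMod.intCast_zmod_eq_zero_iff_dvd _ _).mp hcb1
    exact ⟨t, by linarith⟩
  have hpc : ¬ (p:ℤ) ∣ c := by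
    rintro ⟨k, hk⟩
    have : (p:ℤ) ∣ 1 := ⟨k * b - t, by rw [hk] at ht; linear_combination -ht⟩
    exact absurd (Int.le_of_dvd one_pos this)
      (by have := (Fact.out : p.Prime).two_le; omega)
  -- the construction
  refine ⟨(c:ℚ) • z.1, c^2 * p * m' + c^2 * a * b, ?_, ?_, ?_, ?_, ?_, c, hpc, ?_⟩
  · rw [show ((c:ℚ)) • z.1 = c • z.1 from Int.cast_smul_eq_zsmul ℚ c z.1]
    exact Submodule.smul_mem _ _ hz1Λ
  · -- membership in p * dual
    rw [mem_psmul_iff]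
    refine ⟨(p:ℚ)⁻¹ • ((c:ℚ) • z.1, ((c^2 * p * m' + c^2 * a * b : ℤ) : ℚ), (1:ℚ)), ?_, by
      rw [smul_smul, mul_inv_cancel₀ hp0, one_smul]⟩
    rw [mem_dualL_iff]
    intro y hy
    obtain ⟨hy1, hy2⟩ := Submodule.mem_prod.mp hy
    obtain ⟨m₀, n₀, hy2eq⟩ := (mem_intLat_iff _).mp hy2
    obtain ⟨k, hk⟩ := hzpair (y.1, 0, 0) (Submodule.mem_prod.mpr ⟨hy1, zero_mem _⟩)
    rw [sumForm_apply'] at hk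
    simp only [mul_zero, sub_zero, zero_mul] at hk
    refine ⟨c * k - (c^2 * p * m' + c^2 * a * b) * n₀ - m₀, ?_⟩
    rw [sumForm_apply']
    simp only [Prod.smul_fst, Prod.smul_snd, smul_eq_mul, map_smul, LinearMap.smul_apply]
    rw [hk]
    have hy21 : y.2.1 = (m₀ : ℚ) := by rw [hy2eq]
    have hy22 : y.2.2 = (n₀ : ℚ) := by rw [hy2eq]
    rw [hy21, hy22]
    push_cast
    field_simp
  · -- primitivity
    rintro ⟨m₁, hm1, y, hy, hxy⟩
    obtain ⟨m₀, n₀, hy2eq⟩ := (mem_intLat_iff _).mp (Submodule.mem_prod.mp hy).2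
    have h22 : (1:ℚ) = m₁ • y.2.2 := congrArg (fun v => v.2.2) hxy
    rw [hy2eq] at h22
    simp only [zsmul_eq_mul] at h22
    have hint : (1:ℤ) = m₁ * n₀ := by exact_mod_cast h22
    have := Int.le_of_dvd one_pos ⟨n₀, hint⟩
    omega
  · -- isotropic
    rw [sumForm_apply']
    simp only [map_smul, LinearMap.smul_apply, smul_eq_mul]
    rw [hn]
    have : ((n:ℤ):ℚ) = (p:ℚ)^2 * m' + (p:ℚ) * a * b := by exact_mod_cast congrArg (Int.cast : ℤ → ℚ) hkey
    rw [this]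
    push_cast
    ring
  · -- square of l
    simp only [map_smul, LinearMap.smul_apply, smul_eq_mul]
    rw [hn]
    have : ((n:ℤ):ℚ) = (p:ℚ)^2 * m' + (p:ℚ) * a * b := by exact_mod_cast congrArg (Int.cast : ℤ → ℚ) hkey
    rw [this]
    push_cast
    ring
  · -- congruence with c • z mod p
    rw [mem_psmul_iff]
    refine ⟨((0:Q), ((c^2 * m' + c * a * t : ℤ) : ℚ), ((-t : ℤ) : ℚ)), ?_, ?_⟩
    · exact Submodule.mem_prod.mpr ⟨zero_mem _,
        (mem_intLat_iff _).mpr ⟨c^2 * m' + c * a * t, -t, rfl⟩⟩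
    · have hcz : (c • z : Q × ℚ × ℚ) = (c:ℚ) • z := (Int.cast_smul_eq_zsmul ℚ c z).symm
      rw [hcz]
      refine Prod.ext ?_ (Prod.ext ?_ ?_)
      · simp [Prod.smul_def]
      · simp only [Prod.smul_fst, Prod.smul_snd, Prod.fst_sub, Prod.snd_sub, smul_eq_mul]
        rw [ha]
        have h : (p:ℤ) * (c^2 * m' + c * a * t) = (c^2 * p * m' + c^2 * a * b) - c * a := by
          linear_combination (-(c*a)) * ht
        push_cast
        push_cast at h
        exact_mod_cast h
      · simp only [Prod.smul_fst, Prod.smul_snd, Prod.fst_sub, Prod.snd_sub, smul_eq_mul]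
        rw [hb]
        have h : (p:ℤ) * (-t) = 1 - c * b := by linarith
        push_cast
        push_cast at h
        exact_mod_cast h
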